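/- arXiv:2301.03683 — 7 statements merged into one kernel-verified Lean document; each statement's English description precedes it below -/
import Mathlib

section
/- Let (g,γ) be a construction pair on an abelian group (X,+). Then for all x,y ∈ X and every integer i one has: g(0)=0, g(2x)=2g(x) and g(−x)=−g(x); γ(x,y) ∈ rad γ, 2x ∈ rad γ and 2γ(x,y)=0; the i-th iterate g^i maps rad γ bijectively onto rad γ and maps the image of γ bijectively onto the image of γ; g^i(x+y)=g^i(x)+g^i(y) whenever x ∈ rad γ or y ∈ rad γ; in particular g^i restricts to an automorphism of the subgroup rad γ. -/
/-- The radical of a symmetric mapping `γ : X × X → X`. -/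
def radical {X : Type*} [AddCommGroup X] (γ : X → X → X) : Set X :=
  {x | ∀ y, γ x y = 0}

/-- A construction pair `(g, γ)` on an abelian group `(X, +)`. -/
structure IsConstructionPair {X : Type*} [AddCommGroup X]
    (g : Equiv.Perm X) (γ : X → X → X) : Prop where
  symm : ∀ x y, γ x y = γ y x
  alt : ∀ x, γ x x = 0
  add_left : ∀ x y z, γ (x + y) z = γ x z + γ y z
  add_right : ∀ x y z, γ x (y + z) = γ x y + γ x z
  c1 : ∀ x y, g⁻¹ (g x + g y)
      = x + y + γ x y + g⁻¹ (γ x y) + g⁻¹ (g⁻¹ (γ x y))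
  c2 : ∀ x y z, γ (γ x y) z = 0
  c3 : ∀ x y, g⁻¹ (γ x y) = γ (g x) y

theorem Equiv.Perm.apply_inv_self {α : Type*} (f : Equiv.Perm α) (x : α) : f (f⁻¹ x) = x :=
  f.apply_symm_apply x

theorem Equiv.Perm.inv_apply_self {α : Type*} (f : Equiv.Perm α) (x : α) : f⁻¹ (f x) = x :=
  f.symm_apply_apply x

section Aux
variable {X : Type*} [AddCommGroup X] {g : Equiv.Perm X} {γ : X → X → X}
  (h : IsConstructionPair g γ)
include h

lemma cp_two_gamma (x y : X) : γ x y + γ x y = 0 := by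
  have H := h.alt (x + y)
  rw [h.add_left, h.add_right, h.add_right, h.alt, h.alt, h.symm y x] at H
  rw [zero_add, add_zero] at H
  exact H

lemma cp_gamma_zero_left (y : X) : γ 0 y = 0 := by
  have H := h.add_left 0 0 y
  rw [add_zero] at H
  nth_rewrite 1 [← add_zero (γ 0 y)] at H
  exact (add_left_cancel H).symm

lemma cp_gamma_neg_right (x y : X) : γ x (-y) = -γ x y := by
  have H := h.add_right x y (-y)
  rw [add_neg_cancel, h.symm, cp_gamma_zero_left h] at H
  exact eq_neg_of_add_eq_zero_right H.symm

lemma cp_ginv_zero : g⁻¹ 0 = 0 := by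
  have H := h.c3 0 (g 0)
  rw [cp_gamma_zero_left h, h.symm, h.alt] at H
  exact H

lemma cp_g_zero : g 0 = 0 := by
  calc g 0 = g (g⁻¹ 0) := by rw [cp_ginv_zero h]
    _ = 0 := g.apply_inv_self 0

lemma cp_gamma_mem_rad (x y : X) : γ x y ∈ radical γ := fun z => h.c2 x y z

lemma cp_rad_g {x : X} (hx : x ∈ radical γ) : g x ∈ radical γ := by
  intro y
  rw [← h.c3, hx y, cp_ginv_zero h]

lemma cp_rad_ginv {x : X} (hx : x ∈ radical γ) : g⁻¹ x ∈ radical γ := by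
  intro y
  have H := h.c3 (g⁻¹ x) y
  rw [g.apply_inv_self, hx y] at H
  have H2 := congrArg g H
  rwa [g.apply_inv_self, cp_g_zero h] at H2

lemma cp_g_add {x y : X} (hy : y ∈ radical γ) : g (x + y) = g x + g y := by
  have H := h.c1 x y
  rw [h.symm, hy x, cp_ginv_zero h, cp_ginv_zero h] at H
  simp only [add_zero] at H
  have H2 := congrArg g H
  rwa [g.apply_inv_self, eq_comm] at H2

lemma cp_ginv_add {x y : X} (hy : y ∈ radical γ) :
    g⁻¹ (x + y) = g⁻¹ x + g⁻¹ y := by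
  have hy' : g⁻¹ y ∈ radical γ := cp_rad_ginv h hy
  have H := cp_g_add (x := g⁻¹ x) h hy'
  rw [g.apply_inv_self, g.apply_inv_self] at H
  rw [← H, g.inv_apply_self]

lemma cp_g_im {z : X} (hz : ∃ x y, γ x y = z) : ∃ x y, γ x y = g z := by
  obtain ⟨x, y, rfl⟩ := hz
  refine ⟨g⁻¹ x, y, ?_⟩
  have H := h.c3 (g⁻¹ x) y
  rw [g.apply_inv_self] at H
  have H2 := congrArg g H
  rw [g.apply_inv_self] at H2
  exact H2

lemma cp_ginv_im {z : X} (hz : ∃ x y, γ x y = z) : ∃ x y, γ x y = g⁻¹ z := by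
  obtain ⟨x, y, rfl⟩ := hz
  exact ⟨g x, y, (h.c3 x y).symm⟩

lemma cp_zpow_rad (i : ℤ) : ∀ x ∈ radical γ, (g ^ i) x ∈ radical γ := by
  induction i using Int.induction_on with
  | zero => intro x hx; simpa using hx
  | succ n ih =>
      intro x hx
      rw [zpow_add_one, Equiv.Perm.mul_apply]
      exact ih _ (cp_rad_g h hx)
  | pred n ih =>
      intro x hx
      rw [zpow_sub_one, Equiv.Perm.mul_apply]
      exact ih _ (cp_rad_ginv h hx)

lemma cp_zpow_im (i : ℤ) : ∀ z, (∃ x y, γ x y = z) → ∃ x y, γ x y = (g ^ i) z := by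
  induction i using Int.induction_on with
  | zero => intro z hz; simpa using hz
  | succ n ih =>
      intro z hz
      rw [zpow_add_one, Equiv.Perm.mul_apply]
      exact ih _ (cp_g_im h hz)
  | pred n ih =>
      intro z hz
      rw [zpow_sub_one, Equiv.Perm.mul_apply]
      exact ih _ (cp_ginv_im h hz)

lemma cp_zpow_add (i : ℤ) : ∀ x y : X, y ∈ radical γ →
    (g ^ i) (x + y) = (g ^ i) x + (g ^ i) y := by
  induction i using Int.induction_on with
  | zero => intro x y _; simp
  | succ n ih =>
      intro x y hy
      simp only [zpow_add_one, Equiv.Perm.mul_apply]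
      rw [cp_g_add h hy]
      exact ih _ _ (cp_rad_g h hy)
  | pred n ih =>
      intro x y hy
      simp only [zpow_sub_one, Equiv.Perm.mul_apply]
      rw [cp_ginv_add h hy]
      exact ih _ _ (cp_rad_ginv h hy)

omit h in
omit [AddCommGroup X] in
lemma cp_bijOn (e : Equiv.Perm X) (S : Set X) (h1 : ∀ x ∈ S, e x ∈ S)
    (h2 : ∀ x ∈ S, e⁻¹ x ∈ S) : Set.BijOn (⇑e) S S :=
  ⟨h1, e.injective.injOn, fun z hz => ⟨e⁻¹ z, h2 z hz, e.apply_inv_self z⟩⟩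

end Aux

theorem stmt_0 {X : Type*} [AddCommGroup X] (g : Equiv.Perm X) (γ : X → X → X)
    (h : IsConstructionPair g γ) :
    g 0 = 0 ∧
    (∀ x : X, g (2 • x) = 2 • g x) ∧
    (∀ x : X, g (-x) = -(g x)) ∧
    (∀ x y : X, γ x y ∈ radical γ) ∧
    (∀ x : X, 2 • x ∈ radical γ) ∧
    (∀ x y : X, 2 • γ x y = 0) ∧
    (∀ i : ℤ, Set.BijOn (⇑(g ^ i)) (radical γ) (radical γ)) ∧
    (∀ i : ℤ, Set.BijOn (⇑(g ^ i)) {z | ∃ x y, γ x y = z} {z | ∃ x y, γ x y = z}) ∧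
    (∀ (i : ℤ) (x y : X), (x ∈ radical γ ∨ y ∈ radical γ) →
      (g ^ i) (x + y) = (g ^ i) x + (g ^ i) y) := by
  refine ⟨cp_g_zero h, ?_, ?_, cp_gamma_mem_rad h, ?_, ?_, ?_, ?_, ?_⟩
  · -- g (2 • x) = 2 • g x
    intro x
    have H := h.c1 x x
    rw [h.alt, cp_ginv_zero h, cp_ginv_zero h] at H
    simp only [add_zero] at H
    have H2 := congrArg g H
    rw [g.apply_inv_self] at H2
    rw [two_nsmul, two_nsmul, ← H2]
  · -- g (-x) = -(g x)
    intro x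
    have hxy : γ x (-x) = 0 := by rw [cp_gamma_neg_right h, h.alt, neg_zero]
    have H := h.c1 x (-x)
    rw [hxy, cp_ginv_zero h, cp_ginv_zero h, add_neg_cancel] at H
    simp only [add_zero, zero_add] at H
    have H2 := congrArg g H
    rw [g.apply_inv_self, cp_g_zero h] at H2
    exact eq_neg_of_add_eq_zero_right H2
  · -- 2 • x ∈ radical γ
    intro x y
    rw [two_nsmul, h.add_left]
    exact cp_two_gamma h x y
  · -- 2 • γ x y = 0
    intro x y
    rw [two_nsmul]
    exact cp_two_gamma h x y
  · -- BijOn radical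
    intro i
    refine cp_bijOn _ _ (cp_zpow_rad h i) ?_
    intro x hx
    have : (g ^ i)⁻¹ = g ^ (-i) := by rw [zpow_neg]
    rw [this]
    exact cp_zpow_rad h (-i) x hx
  · -- BijOn image
    intro i
    refine cp_bijOn _ _ (fun z hz => cp_zpow_im h i z hz) ?_
    intro z hz
    have : (g ^ i)⁻¹ = g ^ (-i) := by rw [zpow_neg]
    rw [this]
    exact cp_zpow_im h (-i) z hz
  · -- additivity
    intro i x y hxy
    rcases hxy with hx | hy
    · rw [add_comm x y, add_comm ((g ^ i) x)]
      exact cp_zpow_add h i y x hx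
    · exact cp_zpow_add h i x y hy
end

section
/- Let (g,γ) be a construction pair on an abelian group (X,+). Define γ' : X × X → X by γ'(x,y) = g(γ(x,y)). Then (g⁻¹, γ') is a construction pair on (X,+); that is, γ' is symmetric, alternating and biadditive, g(g⁻¹(x)+g⁻¹(y)) = x+y+γ'(x,y)+g(γ'(x,y))+g²(γ'(x,y)) for all x,y, γ'(γ'(x,y),z)=0 for all x,y,z, and g(γ'(x,y)) = γ'(g⁻¹(x),y) for all x,y. -/
theorem perm_apply_inv_self {X : Type*} (g : Equiv.Perm X) (x : X) : g (g⁻¹ x) = x :=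
  g.apply_symm_apply x

theorem perm_inv_apply_self {X : Type*} (g : Equiv.Perm X) (x : X) : g⁻¹ (g x) = x :=
  g.symm_apply_apply x

theorem stmt_2 {X : Type*} [AddCommGroup X] (g : Equiv.Perm X) (γ : X → X → X)
    (h : IsConstructionPair g γ) :
    IsConstructionPair g⁻¹ (fun x y => g (γ x y)) := by
  obtain ⟨hs, ha, hal, har, hc1, hc2, hc3⟩ := h
  -- basic consequences
  have hγ0 : ∀ z, γ 0 z = 0 := by
    intro z
    have h0 := hal 0 0 z
    rw [add_zero] at h0
    exact left_eq_add.mp h0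
  have hγ0' : ∀ z, γ z 0 = 0 := fun z => by rw [hs]; exact hγ0 z
  have hginv0 : g⁻¹ 0 = 0 := by
    have h0 := hc3 0 0
    rw [hγ0] at h0
    rw [h0, hγ0']
  have hg0 : g 0 = 0 := by
    conv_lhs => rw [← hginv0]
    exact perm_apply_inv_self g 0
  -- 2-torsion of γ-values
  have htor : ∀ a b : X, γ a b + γ a b = 0 := by
    intro a b
    have h0 := ha (a + b)
    rw [hal, har, har, ha, ha, hs b a] at h0
    simpa using h0
  -- orthogonality
  have hzero : ∀ u a b : X, γ u (γ a b) = 0 := fun u a b => by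
    rw [hs]; exact hc2 a b u
  -- additivity of g on orthogonal pairs
  have hA : ∀ a b : X, γ a b = 0 → g (a + b) = g a + g b := by
    intro a b hab
    have h0 := hc1 a b
    rw [hab, hginv0, hginv0, add_zero, add_zero, add_zero] at h0
    have := congrArg g h0
    rw [perm_apply_inv_self g] at this
    exact this.symm
  -- c3 in the other direction
  have hc3' : ∀ a b : X, g (γ a b) = γ (g⁻¹ a) b := by
    intro a b
    have h0 := hc3 (g⁻¹ a) b
    rw [perm_apply_inv_self g] at h0
    rw [← h0, perm_apply_inv_self g]
  refine ⟨?_, ?_, ?_, ?_, ?_, ?_, ?_⟩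
  · intro x y
    rw [hs x y]
  · intro x
    rw [ha, hg0]
  · intro x y z
    rw [hal]
    exact hA _ _ (hc2 x z (γ y z))
  · intro x y z
    rw [har]
    exact hA _ _ (hc2 x y (γ x z))
  · -- main identity
    intro x y
    simp only [inv_inv, perm_inv_apply_self]
    set c := γ x y with hc
    have e1g : g c = γ (g⁻¹ x) y := hc3' x y
    have e2g : g (g c) = γ (g⁻¹ (g⁻¹ x)) y := by rw [e1g]; exact hc3' _ y
    -- the original c1 at (g⁻¹ x, g⁻¹ y)
    have hd : γ (g⁻¹ x) (g⁻¹ y) = g (g c) := by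
      rw [← hc3' x (g⁻¹ y)]
      congr 1
      rw [hs x (g⁻¹ y), ← hc3' y x, hs y x]
    have e1 : g⁻¹ (x + y) = g⁻¹ x + g⁻¹ y + g (g c) + g c + c := by
      have h0 := hc1 (g⁻¹ x) (g⁻¹ y)
      rw [perm_apply_inv_self g, perm_apply_inv_self g, hd, perm_inv_apply_self g, perm_inv_apply_self g] at h0
      exact h0
    -- torsion for g-powers of c
    have tc : c + c = 0 := htor x y
    have tgc : g c + g c = 0 := by rw [e1g]; exact htor _ _
    have tggc : g (g c) + g (g c) = 0 := by rw [e2g]; exact htor _ _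
    have e2 : g⁻¹ x + g⁻¹ y = g⁻¹ (x + y) + (c + (g c + g (g c))) := by
      rw [e1]
      have h9 : g (g c) + g (g c) + (g c + g c) + (c + c) = 0 := by
        rw [tc, tgc, tggc]; abel
      linear_combination (norm := abel) -h9
    rw [e2]
    have o1 : γ (g⁻¹ (x + y)) (c + (g c + g (g c))) = 0 := by
      rw [har, har, e2g, e1g, hc, hzero, hzero, hzero]
      simp
    rw [hA _ _ o1, perm_apply_inv_self g]
    have o2 : γ c (g c + g (g c)) = 0 := by
      rw [har, e2g, e1g, hzero, hzero]
      simp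
    rw [hA _ _ o2]
    have o3 : γ (g c) (g (g c)) = 0 := by
      rw [e2g]; exact hzero _ _ _
    rw [hA _ _ o3]
    abel
  · intro x y z
    have h0 := hc3 (γ x y) z
    rw [hc2, hginv0] at h0
    show g (γ (g (γ x y)) z) = 0
    rw [← h0, hg0]
  · intro x y
    simp only [inv_inv]
    exact congrArg g (hc3' x y)
end

section
/- Let (g,γ) be a construction pair on an abelian group (X,+). Then for every integer i and all x,y ∈ X, g^{−i}(g^i(x)+g^i(y)) = x + y + ∑_{k∈I(0,3i)} g^{−k}(γ(x,y)). -/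
/-- The interval `I(i,j)` of integers: `∅` if `i = j`, `{i,…,j-1}` if `i < j`,
and `{j,…,i-1}` if `j < i`. -/
noncomputable def I (i j : ℤ) : Finset ℤ := Finset.Ico (min i j) (max i j)

namespace CP

variable {X : Type*} [AddCommGroup X] {g : Equiv.Perm X} {γ : X → X → X}
lemma zpow_comp {Y : Type*} (g : Equiv.Perm Y) (a b : ℤ) (x : Y) :
    (g ^ (a + b)) x = (g ^ a) ((g ^ b) x) := by
  rw [zpow_add, Equiv.Perm.mul_apply]

variable (h : IsConstructionPair g γ)
include h

lemma gamma_zero_right (x : X) : γ x 0 = 0 := by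
  have := h.add_right x 0 0
  simpa using this

lemma gamma_zero_left (x : X) : γ 0 x = 0 := by
  rw [h.symm]; exact gamma_zero_right h x

lemma ginv_zero : g⁻¹ (0 : X) = 0 := by
  have := h.c3 0 0
  rw [gamma_zero_left h, gamma_zero_right h] at this
  exact this

lemma g_zero : g (0 : X) = 0 := by
  have := ginv_zero (g := g) h
  exact (Equiv.apply_eq_iff_eq_symm_apply g).2 this.symm

lemma gamma_g_left (x y : X) : γ (g x) y = g⁻¹ (γ x y) := (h.c3 x y).symm

lemma gamma_g_right (x y : X) : γ x (g y) = g⁻¹ (γ x y) := by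
  rw [h.symm, gamma_g_left h, h.symm]

lemma gamma_ginv_left (x y : X) : γ (g⁻¹ x) y = g (γ x y) := by
  have := h.c3 (g⁻¹ x) y
  rw [Equiv.Perm.apply_inv_self] at this
  rw [← this, Equiv.Perm.apply_inv_self]

lemma gamma_ginv_right (x y : X) : γ x (g⁻¹ y) = g (γ x y) := by
  rw [h.symm, gamma_ginv_left h, h.symm]

/-- Elements of the form `γ a b` (and their `g`-orbits) are "central". -/
def Central (γ : X → X → X) (t : X) : Prop := ∀ w : X, γ w t = 0

lemma central_gamma (a b : X) : Central γ (γ a b) := fun w => by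
  rw [h.symm]; exact h.c2 a b w

lemma central_g {t : X} (ht : Central γ t) : Central γ (g t) := fun w => by
  rw [gamma_g_right h, ht w, ginv_zero h]

lemma central_ginv {t : X} (ht : Central γ t) : Central γ (g⁻¹ t) := fun w => by
  rw [gamma_ginv_right h, ht w, g_zero h]

lemma central_zpow {t : X} (ht : Central γ t) (n : ℤ) : Central γ ((g ^ n) t) := by
  induction n using Int.induction_on with
  | zero => simpa using ht
  | succ k ih =>
      have : ((k : ℤ) + 1) = 1 + (k : ℤ) := by ring
      rw [this, zpow_comp g _ _]
      simpa using central_g h ih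
  | pred k ih =>
      have : (-(k : ℤ) - 1) = (-1) + (-(k : ℤ)) := by ring
      rw [this, zpow_comp g _ _]
      simpa using central_ginv h ih

lemma central_add {s t : X} (hs : Central γ s) (ht : Central γ t) :
    Central γ (s + t) := fun w => by rw [h.add_right, hs w, ht w, add_zero]

lemma g_add_central {t : X} (ht : Central γ t) (w : X) :
    g (w + t) = g w + g t := by
  have := h.c1 w t
  rw [ht w, ginv_zero h, ginv_zero h] at this
  simp only [add_zero] at this
  rw [← this, Equiv.Perm.apply_inv_self]

lemma ginv_add_central {t : X} (ht : Central γ t) (w : X) :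
    g⁻¹ (w + t) = g⁻¹ w + g⁻¹ t := by
  have := h.c1 (g⁻¹ w) (g⁻¹ t)
  rw [Equiv.Perm.apply_inv_self, Equiv.Perm.apply_inv_self] at this
  have hz : γ (g⁻¹ w) (g⁻¹ t) = 0 := by
    rw [gamma_ginv_left h, gamma_ginv_right h, ht w, g_zero h, g_zero h]
  rw [hz] at this
  simp only [ginv_zero h] at this
  simpa using this

lemma zpow_add_central {t : X} (ht : Central γ t) (n : ℤ) (w : X) :
    (g ^ n) (w + t) = (g ^ n) w + (g ^ n) t := by
  induction n using Int.induction_on with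
  | zero => simp
  | succ k ih =>
      have e : ((k : ℤ) + 1) = 1 + (k : ℤ) := by ring
      rw [e, zpow_comp g _ _, zpow_comp g _ _, zpow_comp g _ _, ih]
      simpa using g_add_central h (central_zpow h ht k) ((g ^ (k:ℤ)) w)
  | pred k ih =>
      have e : (-(k : ℤ) - 1) = (-1) + (-(k : ℤ)) := by ring
      rw [e, zpow_comp g _ _, zpow_comp g _ _, zpow_comp g _ _, ih]
      simpa using ginv_add_central h (central_zpow h ht (-(k:ℤ))) ((g ^ (-(k:ℤ))) w)

lemma gamma_zpow_left (n : ℤ) (x y : X) :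
    γ ((g ^ n) x) y = (g ^ (-n)) (γ x y) := by
  induction n using Int.induction_on with
  | zero => simp
  | succ k ih =>
      have e : ((k : ℤ) + 1) = 1 + (k : ℤ) := by ring
      rw [e, zpow_comp g _ _]
      have e' : (-(1 + (k : ℤ))) = (-1) + (-(k : ℤ)) := by ring
      rw [e', zpow_comp g _ _]
      simp only [zpow_one, zpow_neg_one]
      rw [gamma_g_left h, ih]
  | pred k ih =>
      have e : (-(k : ℤ) - 1) = (-1) + (-(k : ℤ)) := by ring
      rw [e, zpow_comp g _ _]
      have e' : (-((-1) + (-(k : ℤ)))) = 1 + (-(-(k : ℤ))) := by ring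
      rw [e', zpow_comp g _ _]
      simp only [zpow_one, zpow_neg_one]
      rw [gamma_ginv_left h, ih]

lemma gamma_zpow_both (n : ℤ) (x y : X) :
    γ ((g ^ n) x) ((g ^ n) y) = (g ^ (-(2 * n))) (γ x y) := by
  rw [gamma_zpow_left h, h.symm, gamma_zpow_left h, h.symm]
  rw [← zpow_comp g _ _]
  ring_nf

end CP

namespace CP
variable {X : Type*} [AddCommGroup X] {g : Equiv.Perm X} {γ : X → X → X}
variable (h : IsConstructionPair g γ)
include h

lemma central_zero : Central γ (0 : X) := fun w => gamma_zero_right h w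

lemma two_gamma (a b : X) : γ a b + γ a b = 0 := by
  have e := h.alt (a + b)
  rw [h.add_left, h.add_right, h.add_right, h.alt, h.alt, h.symm b a] at e
  simpa using e

lemma central_sum {s : Finset ℤ} {f : ℤ → X} (hf : ∀ k ∈ s, Central γ (f k)) :
    Central γ (∑ k ∈ s, f k) := by
  classical
  induction s using Finset.induction_on with
  | empty => simpa using central_zero h
  | insert _ _ hnot ih =>
      rw [Finset.sum_insert hnot]
      exact central_add h (hf _ (Finset.mem_insert_self _ _))
        (ih fun k hk => hf k (Finset.mem_insert_of_mem hk))

lemma zpow_zero_apply (n : ℤ) : (g ^ n) (0 : X) = 0 := by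
  induction n using Int.induction_on with
  | zero => simp
  | succ k ihk =>
      rw [show ((k:ℤ)+1) = 1 + (k:ℤ) by ring, zpow_comp g _ _, ihk]
      simpa using g_zero h
  | pred k ihk =>
      rw [show (-(k:ℤ)-1) = (-1) + (-(k:ℤ)) by ring, zpow_comp g _ _, ihk]
      simpa using ginv_zero h

lemma zpow_sum_central {c : X} (hc : Central γ c) (m : ℤ) (s : Finset ℤ)
    (e : ℤ → ℤ) :
    (g ^ m) (∑ k ∈ s, (g ^ (e k)) c) = ∑ k ∈ s, (g ^ (m + e k)) c := by
  classical
  induction s using Finset.induction_on with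
  | empty => simpa using zpow_zero_apply h m
  | insert _ _ hnot ih =>
      rw [Finset.sum_insert hnot, Finset.sum_insert hnot, add_comm ((g ^ e _) c),
        zpow_add_central h (central_zpow h hc _) m, ih, ← zpow_comp g _ _,
        add_comm _ ((g ^ (m + e _)) c)]

end CP

lemma I_nonneg {n : ℤ} (hn : 0 ≤ n) : I 0 n = Finset.Ico 0 n := by
  simp [I, min_eq_left hn, max_eq_right hn]

lemma I_nonpos {n : ℤ} (hn : n ≤ 0) : I 0 n = Finset.Ico n 0 := by
  simp [I, min_eq_right hn, max_eq_left hn]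

lemma Ico_three (n : ℤ) : Finset.Ico n (n + 3) = {n, n + 1, n + 2} := by
  ext m
  simp only [Finset.mem_Ico, Finset.mem_insert, Finset.mem_singleton]
  omega

lemma sum_Ico_split {M : Type*} [AddCommMonoid M] (f : ℤ → M) {a b c : ℤ}
    (hab : a ≤ b) (hbc : b ≤ c) :
    ∑ k ∈ Finset.Ico a c, f k
      = ∑ k ∈ Finset.Ico a b, f k + ∑ k ∈ Finset.Ico b c, f k := by
  rw [← Finset.Ico_union_Ico_eq_Ico hab hbc,
    Finset.sum_union (Finset.Ico_disjoint_Ico_consecutive a b c)]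

lemma sum_Ico_shift {M : Type*} [AddCommMonoid M] (f : ℤ → M) (a b d : ℤ) :
    ∑ k ∈ Finset.Ico (d + a) (d + b), f k = ∑ k ∈ Finset.Ico a b, f (d + k) := by
  rw [← Finset.map_add_left_Ico, Finset.sum_map]
  rfl

lemma sum_Ico_three {M : Type*} [AddCommMonoid M] (f : ℤ → M) (n : ℤ) :
    ∑ k ∈ Finset.Ico n (n + 3), f k = f n + f (n + 1) + f (n + 2) := by
  rw [Ico_three,
    Finset.sum_insert (by simp only [Finset.mem_insert, Finset.mem_singleton]; omega),
    Finset.sum_insert (by simp only [Finset.mem_singleton]; omega),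
    Finset.sum_singleton, add_assoc]

open CP

theorem stmt_3 {X : Type*} [AddCommGroup X] (g : Equiv.Perm X) (γ : X → X → X)
    (h : IsConstructionPair g γ) (i : ℤ) (x y : X) :
    (g ^ (-i)) ((g ^ i) x + (g ^ i) y)
      = x + y + ∑ k ∈ I 0 (3 * i), (g ^ (-k)) (γ x y) := by
  induction i using Int.induction_on generalizing x y with
  | zero => simp [I]
  | succ k ih =>
      set i : ℤ := (k : ℤ) with hi
      have hi0 : 0 ≤ i := Int.natCast_nonneg k
      set c : X := γ x y with hc
      have hcc : Central γ c := central_gamma h x y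
      set u : X := (g ^ i) x with hu
      set v : X := (g ^ i) y with hv
      -- rewrite the applications
      have hgu : (g ^ (i + 1)) x = g u := by
        rw [show i + 1 = 1 + i by ring, zpow_comp g _ _, zpow_one]
      have hgv : (g ^ (i + 1)) y = g v := by
        rw [show i + 1 = 1 + i by ring, zpow_comp g _ _, zpow_one]
      have houter : ∀ z : X, (g ^ (-(i + 1))) z = (g ^ (-i)) (g⁻¹ z) := fun z => by
        rw [show -(i + 1) = (-i) + (-1) by ring, zpow_comp g _ _, zpow_neg_one]
      have hγuv : γ u v = (g ^ (-(2 * i))) c := gamma_zpow_both h i x y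
      have hc1 := h.c1 u v
      have e2 : g⁻¹ ((g ^ (-(2 * i))) c) = (g ^ (-(2 * i) - 1)) c := by
        rw [show -(2 * i) - 1 = (-1) + (-(2 * i)) by ring, zpow_comp g _ _, zpow_neg_one]
      have e3 : g⁻¹ ((g ^ (-(2 * i) - 1)) c) = (g ^ (-(2 * i) - 2)) c := by
        rw [show -(2 * i) - 2 = (-1) + (-(2 * i) - 1) by ring, zpow_comp g _ _, zpow_neg_one]
      rw [hγuv, e2, e3] at hc1
      rw [hgu, hgv, houter, hc1]
      -- now push (g ^ (-i)) through the sum of centrals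
      rw [zpow_add_central h (central_zpow h hcc _) (-i),
          zpow_add_central h (central_zpow h hcc _) (-i),
          zpow_add_central h (central_zpow h hcc _) (-i),
          ← zpow_comp g _ _, ← zpow_comp g _ _, ← zpow_comp g _ _]
      rw [hu, hv, ih x y, ← hc]
      -- sums
      rw [I_nonneg (by omega : (0:ℤ) ≤ 3 * i), I_nonneg (by omega : (0:ℤ) ≤ 3 * (i+1)),
        show 3 * (i + 1) = 3 * i + 3 by ring,
        sum_Ico_split (fun k : ℤ => (g ^ (-k)) c)
          (show (0:ℤ) ≤ 3 * i by omega) (show 3 * i ≤ 3 * i + 3 by omega),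
        sum_Ico_three]
      rw [show -i + (-(2*i)) = -(3*i) by ring, show -i + (-(2*i) - 1) = -(3*i+1) by ring,
        show -i + (-(2*i) - 2) = -(3*i+2) by ring]
      abel
  | pred k ih =>
      set i : ℤ := -(k : ℤ) with hi
      have hi0 : i ≤ 0 := by omega
      set c : X := γ x y with hc
      have hcc : Central γ c := central_gamma h x y
      set x' : X := g⁻¹ x with hx'
      set y' : X := g⁻¹ y with hy'
      have hgam : γ x' y' = (g ^ (2:ℤ)) c := by
        rw [hx', hy', gamma_ginv_left h, gamma_ginv_right h,
          show (2:ℤ) = 1 + 1 by ring, zpow_comp g _ _, zpow_one, hc]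
      have hgx : (g ^ (i - 1)) x = (g ^ i) x' := by
        rw [show i - 1 = i + (-1) by ring, zpow_comp g _ _, zpow_neg_one, hx']
      have hgy : (g ^ (i - 1)) y = (g ^ i) y' := by
        rw [show i - 1 = i + (-1) by ring, zpow_comp g _ _, zpow_neg_one, hy']
      have houter : ∀ z : X, (g ^ (-(i - 1))) z = g ((g ^ (-i)) z) := fun z => by
        rw [show -(i - 1) = 1 + (-i) by ring, zpow_comp g _ _, zpow_one]
      rw [hgx, hgy, houter, ih x' y', hgam]
      -- normalize the summands
      have hsum1 : ∑ k ∈ I 0 (3 * i), (g ^ (-k)) ((g ^ (2:ℤ)) c)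
          = ∑ k ∈ I 0 (3 * i), (g ^ (-k + 2)) c :=
        Finset.sum_congr rfl fun k _ => by rw [← zpow_comp g _ _]
      rw [hsum1]
      -- split g over the central sum
      have hSc : Central γ (∑ k ∈ I 0 (3 * i), (g ^ (-k + 2)) c) :=
        central_sum h fun k _ => central_zpow h hcc _
      rw [g_add_central h hSc]
      have hgSc : g (∑ k ∈ I 0 (3 * i), (g ^ (-k + 2)) c)
          = ∑ k ∈ I 0 (3 * i), (g ^ (1 + (-k + 2))) c := by
        have := zpow_sum_central h hcc 1 (I 0 (3 * i)) (fun k => -k + 2)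
        simpa using this
      rw [hgSc]
      -- compute g (x' + y')
      have hxx : g x' = x := by rw [hx']; exact g.apply_inv_self x
      have hyy : g y' = y := by rw [hy']; exact g.apply_inv_self y
      have hc1' := h.c1 x' y'
      rw [hxx, hyy, hgam] at hc1'
      have f1 : g⁻¹ ((g ^ (2:ℤ)) c) = (g ^ (1:ℤ)) c := by
        rw [show (1:ℤ) = (-1) + 2 by ring, zpow_comp g _ _, zpow_neg_one]
      have f2 : g⁻¹ ((g ^ (1:ℤ)) c) = (g ^ (0:ℤ)) c := by
        rw [show (0:ℤ) = (-1) + 1 by ring, zpow_comp g _ _, zpow_neg_one]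
      rw [f1, f2] at hc1'
      have hxy := congrArg g hc1'
      rw [g.apply_inv_self] at hxy
      rw [g_add_central h (central_zpow h hcc 0),
        g_add_central h (central_zpow h hcc 1),
        g_add_central h (central_zpow h hcc 2)] at hxy
      have f3 : ∀ n : ℤ, g ((g ^ n) c) = (g ^ (1 + n)) c := fun n => by
        rw [zpow_comp g 1 n, zpow_one]
      rw [f3, f3, f3] at hxy
      rw [show (1:ℤ) + 2 = 3 by norm_num, show (1:ℤ) + 1 = 2 by norm_num,
        show (1:ℤ) + 0 = 1 by norm_num] at hxy
      -- hxy : x + y = g (x' + y') + (g^3) c + (g^2) c + (g^1) c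
      have h2 : ∀ n : ℤ, (g ^ n) c + (g ^ n) c = 0 := by
        intro n
        have hg := gamma_zpow_left h (-n) x y
        rw [neg_neg, ← hc] at hg
        rw [← hg]
        exact two_gamma h _ _
      have hneg : ∀ n : ℤ, -((g ^ n) c) = (g ^ n) c :=
        fun n => neg_eq_of_add_eq_zero_left (h2 n)
      have hval0 : g (x' + y') = x + y
          - ((g ^ (3:ℤ)) c + (g ^ (2:ℤ)) c + (g ^ (1:ℤ)) c) := by
        rw [hxy]; abel
      have hval : g (x' + y') = x + y
          + ((g ^ (3:ℤ)) c + (g ^ (2:ℤ)) c + (g ^ (1:ℤ)) c) := by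
        rw [hval0, sub_eq_add_neg, neg_add, neg_add, hneg 3, hneg 2, hneg 1]
      rw [hval]
      -- sums
      rw [I_nonpos (by omega : 3 * i ≤ 0), I_nonpos (by omega : 3 * (i - 1) ≤ 0)]
      have hre : ∑ k ∈ Finset.Ico (3 * i - 3) (-3 : ℤ), (g ^ (-k)) c
          = ∑ k ∈ Finset.Ico (3 * i) 0, (g ^ (1 + (-k + 2))) c := by
        have h1 := sum_Ico_shift (fun k : ℤ => (g ^ (-k)) c) (3 * i) 0 (-3)
        rw [show (-3:ℤ) + 3 * i = 3 * i - 3 by ring,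
          show (-3:ℤ) + 0 = -3 by ring] at h1
        rw [h1]
        exact Finset.sum_congr rfl fun k _ => by
          rw [show -(-3 + k) = 1 + (-k + 2) by ring]
      rw [← hre,
        show 3 * (i - 1) = 3 * i - 3 by ring,
        sum_Ico_split (fun k : ℤ => (g ^ (-k)) c)
          (show 3 * i - 3 ≤ (-3 : ℤ) by omega) (show (-3 : ℤ) ≤ 0 by omega)]
      have hthree := sum_Ico_three (fun k : ℤ => (g ^ (-k)) c) (-3)
      rw [show (-3:ℤ) + 3 = 0 by norm_num, show (-3:ℤ) + 1 = -2 by norm_num,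
        show (-3:ℤ) + 2 = -1 by norm_num] at hthree
      simp only [neg_neg] at hthree
      rw [hthree]
      abel
end

section
/- Let (g,γ) be a construction pair on an abelian group (X,+). Then for every integer i and all x,y ∈ X, g^{−i}(x+y) = g^{−i}(x) + g^{−i}(y) + ∑_{k∈I(−2i,i)} g^{−k}(γ(x,y)). -/
set_option linter.unusedSectionVars false

namespace CPaux

variable {X : Type*} [AddCommGroup X] {g : Equiv.Perm X} {γ : X → X → X}

lemma zpow_succ_apply (g : Equiv.Perm X) (n : ℤ) (z : X) : (g ^ (n+1)) z = g ((g ^ n) z) := by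
  rw [show n+1 = 1+n by ring, zpow_add, zpow_one, Equiv.Perm.mul_apply]

lemma zpow_pred_apply (g : Equiv.Perm X) (n : ℤ) (z : X) : (g ^ (n-1)) z = g⁻¹ ((g ^ n) z) := by
  rw [show n-1 = -1+n by ring, zpow_add, zpow_neg_one, Equiv.Perm.mul_apply]

section

variable (h : IsConstructionPair g γ)
include h

lemma gamma_zero_left (z : X) : γ 0 z = 0 := by
  have := h.add_left 0 0 z
  simpa using this.symm

lemma gamma_zero_right (z : X) : γ z 0 = 0 := by
  rw [h.symm]; exact gamma_zero_left h z

lemma gamma_neg_left (a z : X) : γ (-a) z = -γ a z := by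
  have H := h.add_left a (-a) z
  rw [add_neg_cancel, gamma_zero_left h] at H
  exact (neg_eq_of_add_eq_zero_right H.symm).symm

lemma two_torsion (a b : X) : γ a b + γ a b = 0 := by
  have H := h.alt (a + b)
  rw [h.add_left, h.add_right, h.add_right, h.alt, h.alt, h.symm b a] at H
  abel_nf at H ⊢
  exact H

lemma inv_zero : g⁻¹ (0 : X) = 0 := by
  have := h.c3 0 0
  rwa [h.alt, gamma_zero_right h] at this

lemma g_zero : g (0 : X) = 0 := by
  conv_lhs => rw [← inv_zero h]
  exact g.apply_symm_apply 0

lemma g_gamma (a b : X) : g (γ a b) = γ (g⁻¹ a) b := by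
  have H := h.c3 (g⁻¹ a) b
  rw [Equiv.Perm.apply_inv_self] at H
  rw [← H, Equiv.Perm.apply_inv_self]

lemma zpow_gamma (n : ℤ) (a b : X) : (g ^ n) (γ a b) = γ ((g ^ (-n)) a) b := by
  induction n using Int.induction_on with
  | zero => simp
  | succ k ih =>
      rw [zpow_succ_apply, ih, g_gamma h, show -((k:ℤ)+1) = -k-1 by ring, zpow_pred_apply]
  | pred k ih =>
      have ih' : (g ^ (-(k:ℤ))) (γ a b) = γ ((g ^ (k:ℤ)) a) b := by
        rw [ih, neg_neg]
      rw [show (-(-(k:ℤ)-1)) = (k:ℤ)+1 by ring, zpow_pred_apply, ih', h.c3,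
        ← zpow_succ_apply]

lemma gamma_zpow₂ (m n : ℤ) (a b : X) :
    γ ((g ^ m) a) ((g ^ n) b) = (g ^ (-(m+n))) (γ a b) := by
  have e1 : (g ^ (-m)) (γ a ((g ^ n) b)) = γ ((g ^ m) a) ((g ^ n) b) := by
    rw [zpow_gamma h (-m), neg_neg]
  have e2 : γ a ((g ^ n) b) = (g ^ (-n)) (γ a b) := by
    calc γ a ((g ^ n) b) = γ ((g ^ n) b) a := h.symm _ _
      _ = (g ^ (-n)) (γ b a) := by rw [zpow_gamma h (-n), neg_neg]
      _ = (g ^ (-n)) (γ a b) := congrArg _ (h.symm b a)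
  rw [← e1, e2, show -(m+n) = -m + -n by ring, zpow_add, Equiv.Perm.mul_apply]


/-- The subgroup generated by all values of `γ`. -/
def V (γ : X → X → X) : AddSubgroup X := AddSubgroup.closure {v | ∃ a b, v = γ a b}

omit h in
lemma gamma_mem_V (a b : X) : γ a b ∈ V γ := AddSubgroup.subset_closure ⟨a, b, rfl⟩

lemma gamma_V_left {s : X} (hs : s ∈ V γ) (z : X) : γ s z = 0 := by
  induction hs using AddSubgroup.closure_induction with
  | mem v hv => obtain ⟨a, b, rfl⟩ := hv; exact h.c2 a b z
  | zero => exact gamma_zero_left h z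
  | add s t _ _ hs ht => rw [h.add_left, hs, ht, add_zero]
  | neg s _ hs => rw [gamma_neg_left h, hs, neg_zero]

lemma gamma_V_right {s : X} (hs : s ∈ V γ) (z : X) : γ z s = 0 := by
  rw [h.symm]; exact gamma_V_left h hs z

/-- key: `g⁻¹` distributes over adding an element of `V`. -/
lemma inv_apply_add' {s : X} (hs : s ∈ V γ) :
    g⁻¹ s ∈ V γ ∧ ∀ w : X, g⁻¹ (w + s) = g⁻¹ w + g⁻¹ s := by
  induction hs using AddSubgroup.closure_induction with
  | mem v hv =>
      obtain ⟨a, b, rfl⟩ := hv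
      have hmem : g⁻¹ (γ a b) ∈ V γ := by
        rw [h.c3]; exact gamma_mem_V _ _
      refine ⟨hmem, fun w => ?_⟩
      have H := h.c1 (g⁻¹ w) (g⁻¹ (γ a b))
      rw [Equiv.Perm.apply_inv_self, Equiv.Perm.apply_inv_self] at H
      rw [gamma_V_right h hmem, inv_zero h, inv_zero h] at H
      simpa using H
  | zero =>
      refine ⟨by rw [inv_zero h]; exact zero_mem _, fun w => by rw [add_zero, inv_zero h, add_zero]⟩
  | add s t _ _ hs ht =>
      obtain ⟨hs1, hs2⟩ := hs; obtain ⟨ht1, ht2⟩ := ht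
      refine ⟨?_, fun w => ?_⟩
      · rw [show s + t = s + t from rfl, ht2 s]; exact add_mem hs1 ht1
      · rw [← add_assoc, ht2 (w + s), hs2 w, ht2 s, add_assoc]
  | neg s _ hs =>
      obtain ⟨hs1, hs2⟩ := hs
      have hneg : g⁻¹ (-s) = -(g⁻¹ s) := by
        have H := hs2 (-s)
        rw [neg_add_cancel, inv_zero h] at H
        exact eq_neg_of_add_eq_zero_left H.symm
      refine ⟨by rw [hneg]; exact neg_mem hs1, fun w => ?_⟩
      have H := hs2 (w + -s)
      rw [add_assoc, neg_add_cancel, add_zero] at H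
      rw [hneg, H]; abel

lemma inv_mem_V {s : X} (hs : s ∈ V γ) : g⁻¹ s ∈ V γ := (inv_apply_add' h hs).1

lemma inv_apply_add (w : X) {s : X} (hs : s ∈ V γ) : g⁻¹ (w + s) = g⁻¹ w + g⁻¹ s :=
  (inv_apply_add' h hs).2 w

lemma inv_neg_apply {t : X} (ht : t ∈ V γ) : g⁻¹ (-t) = -(g⁻¹ t) := by
  have H := inv_apply_add h (-t) ht
  rw [neg_add_cancel, inv_zero h] at H
  exact eq_neg_of_add_eq_zero_left H.symm

lemma g_mem_V {s : X} (hs : s ∈ V γ) : g s ∈ V γ := by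
  induction hs using AddSubgroup.closure_induction with
  | mem v hv =>
      obtain ⟨a, b, rfl⟩ := hv; rw [g_gamma h]; exact gamma_mem_V _ _
  | zero => rw [g_zero h]; exact zero_mem _
  | add s t _ _ hs ht =>
      have H : g⁻¹ (g s + g t) = s + t := by
        rw [inv_apply_add h (g s) ht, Equiv.Perm.inv_apply_self, Equiv.Perm.inv_apply_self]
      have : g (s + t) = g s + g t := by rw [← H, Equiv.Perm.apply_inv_self]
      rw [this]; exact add_mem hs ht
  | neg s _ hs =>
      have H : g⁻¹ (-(g s)) = -s := by rw [inv_neg_apply h hs, Equiv.Perm.inv_apply_self]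
      have : g (-s) = -(g s) := by rw [← H, Equiv.Perm.apply_inv_self]
      rw [this]; exact neg_mem hs

lemma g_apply_add (w : X) {s : X} (hs : s ∈ V γ) : g (w + s) = g w + g s := by
  have H : g⁻¹ (g w + g s) = w + s := by
    rw [inv_apply_add h (g w) (g_mem_V h hs), Equiv.Perm.inv_apply_self,
      Equiv.Perm.inv_apply_self]
  rw [← H, Equiv.Perm.apply_inv_self]

lemma zpow_mem_V (n : ℤ) {s : X} (hs : s ∈ V γ) : (g ^ n) s ∈ V γ := by
  induction n using Int.induction_on with
  | zero => simpa using hs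
  | succ k ih => rw [zpow_succ_apply]; exact g_mem_V h ih
  | pred k ih => rw [show -(k:ℤ)-1 = (-k)-1 from rfl, zpow_pred_apply]; exact inv_mem_V h ih

lemma zpow_zero_apply (n : ℤ) : (g ^ n) (0 : X) = 0 := by
  induction n using Int.induction_on with
  | zero => simp
  | succ k ih => rw [zpow_succ_apply, ih, g_zero h]
  | pred k ih => rw [show -(k:ℤ)-1 = (-k)-1 from rfl, zpow_pred_apply, ih, inv_zero h]

lemma zpow_apply_add (n : ℤ) (w : X) {s : X} (hs : s ∈ V γ) :
    (g ^ n) (w + s) = (g ^ n) w + (g ^ n) s := by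
  induction n using Int.induction_on with
  | zero => simp
  | succ k ih => rw [zpow_succ_apply, zpow_succ_apply, zpow_succ_apply, ih,
      g_apply_add h _ (zpow_mem_V h _ hs)]
  | pred k ih => rw [show -(k:ℤ)-1 = (-k)-1 from rfl, zpow_pred_apply, zpow_pred_apply,
      zpow_pred_apply, ih, inv_apply_add h _ (zpow_mem_V h _ hs)]

lemma zpow_sum_apply {ι : Type*} (n : ℤ) (t : Finset ι) (f : ι → X)
    (hf : ∀ k ∈ t, f k ∈ V γ) :
    (g ^ n) (∑ k ∈ t, f k) = ∑ k ∈ t, (g ^ n) (f k) := by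
  classical
  revert hf
  refine Finset.induction_on t ?_ ?_
  · intro _; simpa using zpow_zero_apply h n
  · intro a t ha ih hf
    rw [Finset.sum_insert ha, Finset.sum_insert ha, add_comm,
      zpow_apply_add h n _ (hf a (Finset.mem_insert_self a t)),
      ih fun k hk => hf k (Finset.mem_insert_of_mem hk), add_comm]

lemma zpow_gamma_two_torsion (n : ℤ) (a b : X) :
    (g ^ n) (γ a b) + (g ^ n) (γ a b) = 0 := by
  rw [← zpow_apply_add h n _ (gamma_mem_V (γ := γ) a b), two_torsion h, zpow_zero_apply h]

end

omit [AddCommGroup X] in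
lemma I_symm (a b : ℤ) : I a b = I b a := by simp [I, min_comm, max_comm]

omit [AddCommGroup X] in
lemma I_of_le {a b : ℤ} (hab : a ≤ b) : I a b = Finset.Ico a b := by
  simp [I, min_eq_left hab, max_eq_right hab]

lemma sum_I_chasles (f : ℤ → X) (hf : ∀ k, f k + f k = 0) (a b c : ℤ) :
    ∑ k ∈ I a b, f k + ∑ k ∈ I b c, f k = ∑ k ∈ I a c, f k := by
  classical
  have key : ∀ u v w : ℤ, u ≤ v → v ≤ w →
      ∑ k ∈ Finset.Ico u v, f k + ∑ k ∈ Finset.Ico v w, f k = ∑ k ∈ Finset.Ico u w, f k := by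
    intro u v w huv hvw
    rw [← Finset.sum_union (Finset.Ico_disjoint_Ico_consecutive u v w),
      Finset.Ico_union_Ico_eq_Ico huv hvw]
  have tt : ∀ u v : ℤ, ∑ k ∈ Finset.Ico u v, f k + ∑ k ∈ Finset.Ico u v, f k = 0 := by
    intro u v
    rw [← Finset.sum_add_distrib]
    exact Finset.sum_eq_zero fun k _ => hf k
  rcases le_total a b with hab | hab <;> rcases le_total b c with hbc | hbc <;>
    rcases le_total a c with hac | hac
  · rw [I_of_le hab, I_of_le hbc, I_of_le hac]; exact key a b c hab hbc
  · have h1 : a = b := by omega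
    have h2 : b = c := by omega
    subst h1; subst h2; simp [I]
  · rw [I_of_le hab, I_symm b c, I_of_le hbc, I_of_le hac]
    rw [← key a c b hac hbc, add_assoc, tt, add_zero]
  · rw [I_of_le hab, I_symm b c, I_of_le hbc, I_symm a c, I_of_le hac]
    rw [← key c a b hac hab, add_comm (∑ k ∈ Finset.Ico a b, f k),
      add_assoc, tt, add_zero]
  · rw [I_symm a b, I_of_le hab, I_of_le hbc, I_of_le hac]
    rw [← key b a c hab hac, ← add_assoc, tt, zero_add]
  · rw [I_symm a b, I_of_le hab, I_of_le hbc, I_symm a c, I_of_le hac]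
    rw [← key b c a hbc hac, add_right_comm, tt, zero_add]
  · have h1 : b = a := by omega
    have h2 : c = b := by omega
    subst h1; subst h2; simp [I]
  · rw [I_symm a b, I_of_le hab, I_symm b c, I_of_le hbc, I_symm a c, I_of_le hac]
    rw [add_comm]; exact key c b a hbc hab

omit [AddCommGroup X] in
lemma I_singleton (a : ℤ) : I a (a + 1) = {a} := by
  rw [I_of_le (by omega)]
  ext k; simp; omega

lemma sum_I_shift (f : ℤ → X) (a b d : ℤ) :
    ∑ k ∈ I a b, f (k + d) = ∑ k ∈ I (a + d) (b + d), f k := by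
  have : I (a + d) (b + d) = Finset.map (addRightEmbedding d) (I a b) := by
    rw [I, I, Finset.map_add_right_Ico]
    congr 1 <;> omega
  rw [this, Finset.sum_map]
  rfl

section
variable (h : IsConstructionPair g γ)
include h

lemma Ssingle (x y : X) : ∀ a b m : ℤ, b = a + 1 → m = -a →
    (g ^ m) (γ x y) = ∑ k ∈ I a b, (g ^ (-k)) (γ x y) := by
  rintro a b m rfl rfl
  rw [I_singleton, Finset.sum_singleton]

lemma step_up (i : ℤ) (x y : X)
    (hi : (g ^ (-i)) (x + y)
      = (g ^ (-i)) x + (g ^ (-i)) y + ∑ k ∈ I (-2 * i) i, (g ^ (-k)) (γ x y)) :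
    (g ^ (-(i+1))) (x + y)
      = (g ^ (-(i+1))) x + (g ^ (-(i+1))) y
        + ∑ k ∈ I (-2 * (i+1)) (i+1), (g ^ (-k)) (γ x y) := by
  have hcV : ∀ m : ℤ, (g ^ m) (γ x y) ∈ V γ := fun m => zpow_mem_V h m (gamma_mem_V x y)
  have tor : ∀ m : ℤ, (g ^ m) (γ x y) + (g ^ m) (γ x y) = 0 :=
    fun m => zpow_gamma_two_torsion h m x y
  have hf2 : ∀ k : ℤ, (g ^ (-k)) (γ x y) + (g ^ (-k)) (γ x y) = 0 := fun k => tor (-k)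
  have e0 : ∀ z : X, (g ^ (-(i+1))) z = g⁻¹ ((g ^ (-i)) z) := by
    intro z; rw [show -(i+1) = -i - 1 by ring, zpow_pred_apply]
  rw [e0, e0, e0, hi]
  have hS : (∑ k ∈ I (-2 * i) i, (g ^ (-k)) (γ x y)) ∈ V γ :=
    AddSubgroup.sum_mem _ fun k _ => hcV (-k)
  rw [inv_apply_add h _ hS]
  have hsum : g⁻¹ (∑ k ∈ I (-2 * i) i, (g ^ (-k)) (γ x y))
      = ∑ k ∈ I (-2 * i + 1) (i + 1), (g ^ (-k)) (γ x y) := by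
    have e1 := zpow_sum_apply h (-1) (I (-2 * i) i) (fun k => (g ^ (-k)) (γ x y))
      (fun k _ => hcV (-k))
    have e2 : ∀ k : ℤ, (g ^ (-1 : ℤ)) ((g ^ (-k)) (γ x y)) = (g ^ (-(k + 1))) (γ x y) := by
      intro k
      rw [show (-(k+1)) = -k - 1 by ring, zpow_pred_apply, zpow_neg_one]
    calc g⁻¹ (∑ k ∈ I (-2 * i) i, (g ^ (-k)) (γ x y))
        = (g ^ (-1 : ℤ)) (∑ k ∈ I (-2 * i) i, (g ^ (-k)) (γ x y)) := by rw [zpow_neg_one]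
      _ = ∑ k ∈ I (-2 * i) i, (g ^ (-(k + 1))) (γ x y) := by
          rw [e1]; exact Finset.sum_congr rfl fun k _ => e2 k
      _ = ∑ k ∈ I (-2 * i + 1) (i + 1), (g ^ (-k)) (γ x y) := by
          have := sum_I_shift (fun k => (g ^ (-k)) (γ x y)) (-2 * i) i 1
          simpa using this
  rw [hsum]
  have H := h.c1 (g⁻¹ ((g ^ (-i)) x)) (g⁻¹ ((g ^ (-i)) y))
  rw [Equiv.Perm.apply_inv_self, Equiv.Perm.apply_inv_self] at H
  have hγ : γ (g⁻¹ ((g ^ (-i)) x)) (g⁻¹ ((g ^ (-i)) y)) = (g ^ (2*i+2)) (γ x y) := by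
    have h1 : g⁻¹ ((g ^ (-i)) x) = (g ^ (-i-1)) x := (zpow_pred_apply g (-i) x).symm
    have h2 : g⁻¹ ((g ^ (-i)) y) = (g ^ (-i-1)) y := (zpow_pred_apply g (-i) y).symm
    rw [h1, h2, gamma_zpow₂ h]
    congr 1
    ring
  rw [hγ] at H
  rw [show g⁻¹ ((g ^ (2*i+2)) (γ x y)) = (g ^ (2*i+2 - 1)) (γ x y) from
        (zpow_pred_apply g (2*i+2) (γ x y)).symm] at H
  rw [show g⁻¹ ((g ^ (2*i+2 - 1)) (γ x y)) = (g ^ (2*i+2 - 1 - 1)) (γ x y) from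
        (zpow_pred_apply g (2*i+2 - 1) (γ x y)).symm] at H
  rw [H]
  have aux : (g ^ (2*i+2)) (γ x y) + (g ^ (2*i+2 - 1)) (γ x y) + (g ^ (2*i+2 - 1 - 1)) (γ x y)
      + ∑ k ∈ I (-2 * i + 1) (i + 1), (g ^ (-k)) (γ x y)
      = ∑ k ∈ I (-2 * (i+1)) (i+1), (g ^ (-k)) (γ x y) := by
    rw [show (-2 * (i+1) : ℤ) = -2*i - 2 by ring]
    rw [Ssingle h x y (-2*i-2) (-2*i-1) (2*i+2) (by ring) (by ring),
        Ssingle h x y (-2*i-1) (-2*i) (2*i+2 - 1) (by ring) (by ring),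
        Ssingle h x y (-2*i) (-2*i+1) (2*i+2 - 1 - 1) (by ring) (by ring)]
    rw [sum_I_chasles _ hf2 (-2*i-2) (-2*i-1) (-2*i),
        sum_I_chasles _ hf2 (-2*i-2) (-2*i) (-2*i+1)]
    rw [sum_I_chasles _ hf2 (-2*i-2) (-2*i+1) (i+1)]
  rw [← aux]
  abel

lemma step_down (i : ℤ) (x y : X)
    (hi : (g ^ (-i)) (x + y)
      = (g ^ (-i)) x + (g ^ (-i)) y + ∑ k ∈ I (-2 * i) i, (g ^ (-k)) (γ x y)) :
    (g ^ (-(i-1))) (x + y)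
      = (g ^ (-(i-1))) x + (g ^ (-(i-1))) y
        + ∑ k ∈ I (-2 * (i-1)) (i-1), (g ^ (-k)) (γ x y) := by
  have hcV : ∀ m : ℤ, (g ^ m) (γ x y) ∈ V γ := fun m => zpow_mem_V h m (gamma_mem_V x y)
  have tor : ∀ m : ℤ, (g ^ m) (γ x y) + (g ^ m) (γ x y) = 0 :=
    fun m => zpow_gamma_two_torsion h m x y
  have hf2 : ∀ k : ℤ, (g ^ (-k)) (γ x y) + (g ^ (-k)) (γ x y) = 0 := fun k => tor (-k)
  have e0 : ∀ z : X, (g ^ (-(i-1))) z = g ((g ^ (-i)) z) := by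
    intro z; rw [show -(i-1) = -i + 1 by ring, zpow_succ_apply]
  rw [e0, e0, e0, hi]
  have hS : (∑ k ∈ I (-2 * i) i, (g ^ (-k)) (γ x y)) ∈ V γ :=
    AddSubgroup.sum_mem _ fun k _ => hcV (-k)
  rw [g_apply_add h _ hS]
  have hsum : g (∑ k ∈ I (-2 * i) i, (g ^ (-k)) (γ x y))
      = ∑ k ∈ I (-2*i - 1) (i - 1), (g ^ (-k)) (γ x y) := by
    have e1 := zpow_sum_apply h 1 (I (-2 * i) i) (fun k => (g ^ (-k)) (γ x y))
      (fun k _ => hcV (-k))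
    have e2 : ∀ k : ℤ, (g ^ (1 : ℤ)) ((g ^ (-k)) (γ x y)) = (g ^ (-(k + -1))) (γ x y) := by
      intro k
      rw [show (-(k + -1)) = -k + 1 by ring, zpow_succ_apply, zpow_one]
    calc g (∑ k ∈ I (-2 * i) i, (g ^ (-k)) (γ x y))
        = (g ^ (1 : ℤ)) (∑ k ∈ I (-2 * i) i, (g ^ (-k)) (γ x y)) := by rw [zpow_one]
      _ = ∑ k ∈ I (-2 * i) i, (g ^ (-(k + -1))) (γ x y) := by
          rw [e1]; exact Finset.sum_congr rfl fun k _ => e2 k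
      _ = ∑ k ∈ I (-2*i - 1) (i - 1), (g ^ (-k)) (γ x y) := by
          have := sum_I_shift (fun k => (g ^ (-k)) (γ x y)) (-2 * i) i (-1)
          rw [show (-2 * i + -1 : ℤ) = -2*i - 1 by ring, show (i + -1 : ℤ) = i - 1 by ring] at this
          simpa using this
  rw [hsum]
  have H := h.c1 ((g ^ (-i)) x) ((g ^ (-i)) y)
  have hγ : γ ((g ^ (-i)) x) ((g ^ (-i)) y) = (g ^ (2*i)) (γ x y) := by
    rw [gamma_zpow₂ h]
    congr 1
    ring
  rw [hγ] at H
  rw [show g⁻¹ ((g ^ (2*i)) (γ x y)) = (g ^ (2*i - 1)) (γ x y) from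
        (zpow_pred_apply g (2*i) (γ x y)).symm] at H
  rw [show g⁻¹ ((g ^ (2*i - 1)) (γ x y)) = (g ^ (2*i - 1 - 1)) (γ x y) from
        (zpow_pred_apply g (2*i - 1) (γ x y)).symm] at H
  have H2 := congrArg g H
  rw [Equiv.Perm.apply_inv_self] at H2
  rw [g_apply_add h _ (hcV (2*i - 1 - 1)), g_apply_add h _ (hcV (2*i - 1)),
      g_apply_add h _ (hcV (2*i))] at H2
  rw [← zpow_succ_apply g (2*i), ← zpow_succ_apply g (2*i - 1),
      ← zpow_succ_apply g (2*i - 1 - 1)] at H2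
  have hGAB : g ((g ^ (-i)) x + (g ^ (-i)) y)
      = g ((g ^ (-i)) x) + g ((g ^ (-i)) y) + (g ^ (2*i + 1)) (γ x y)
        + (g ^ (2*i - 1 + 1)) (γ x y) + (g ^ (2*i - 1 - 1 + 1)) (γ x y) := by
    rw [H2]
    have e : ∀ u t1 t2 t3 : X, t1 + t1 = 0 → t2 + t2 = 0 → t3 + t3 = 0 →
        u = u + t1 + t2 + t3 + t1 + t2 + t3 := by
      intro u t1 t2 t3 e1 e2 e3
      have heq : u + t1 + t2 + t3 + t1 + t2 + t3 = u + (t1 + t1) + (t2 + t2) + (t3 + t3) := by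
        abel
      rw [heq, e1, e2, e3]; abel
    exact e _ _ _ _ (tor _) (tor _) (tor _)
  rw [hGAB]
  have aux : (g ^ (2*i + 1)) (γ x y) + (g ^ (2*i - 1 + 1)) (γ x y) + (g ^ (2*i - 1 - 1 + 1)) (γ x y)
      + ∑ k ∈ I (-2*i - 1) (i - 1), (g ^ (-k)) (γ x y)
      = ∑ k ∈ I (-2 * (i-1)) (i-1), (g ^ (-k)) (γ x y) := by
    rw [show (-2 * (i-1) : ℤ) = -2*i + 2 by ring]
    rw [Ssingle h x y (-2*i-1) (-2*i) (2*i + 1) (by ring) (by ring),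
        Ssingle h x y (-2*i) (-2*i+1) (2*i - 1 + 1) (by ring) (by ring),
        Ssingle h x y (-2*i+1) (-2*i+2) (2*i - 1 - 1 + 1) (by ring) (by ring)]
    rw [sum_I_chasles _ hf2 (-2*i-1) (-2*i) (-2*i+1),
        sum_I_chasles _ hf2 (-2*i-1) (-2*i+1) (-2*i+2)]
    rw [I_symm (-2*i-1) (-2*i+2)]
    rw [sum_I_chasles _ hf2 (-2*i+2) (-2*i-1) (i-1)]
  rw [← aux]
  abel

end
end CPaux

theorem stmt_4 {X : Type*} [AddCommGroup X] (g : Equiv.Perm X) (γ : X → X → X)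
    (h : IsConstructionPair g γ) (i : ℤ) (x y : X) :
    (g ^ (-i)) (x + y)
      = (g ^ (-i)) x + (g ^ (-i)) y + ∑ k ∈ I (-2 * i) i, (g ^ (-k)) (γ x y) := by
  induction i using Int.induction_on with
  | zero => simp [I]
  | succ k ih => exact CPaux.step_up h k x y ih
  | pred k ih => exact CPaux.step_down h (-k) x y ih
end

section
/- Let (g,γ) be a construction pair on an abelian group (X,+), let n be an integer and x ∈ X. Then the following are equivalent: (i) ∑_{0≤k<|n|} g^k(x) ∈ rad γ; (ii) ∑_{k∈I(0,n)} g^{−k}(γ(x,y)) = 0 for all y ∈ X; (iii) ∑_{k∈I(i,i+n)} g^{−k}(γ(x,y)) = 0 for all y ∈ X and all integers i. -/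
section Aux

variable {X : Type*} [AddCommGroup X] {g : Equiv.Perm X} {γ : X → X → X}

lemma gamma_zpow_left (h : IsConstructionPair g γ) (m : ℤ) (a y : X) :
    γ ((g ^ m) a) y = (g ^ (-m)) (γ a y) := by
  induction m using Int.induction_on with
  | zero => simp
  | succ m ih =>
      have h1 : (g ^ ((m : ℤ) + 1)) a = g ((g ^ (m : ℤ)) a) := by
        rw [add_comm, zpow_add, zpow_one]; rfl
      rw [h1, ← h.c3, ih, ← Equiv.Perm.mul_apply, ← zpow_neg_one, ← zpow_add]
      ring_nf
  | pred m ih =>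
      have h1 : (g ^ (-(m : ℤ))) a = g ((g ^ (-(m:ℤ) - 1)) a) := by
        rw [← Equiv.Perm.mul_apply, ← zpow_one_add]; ring_nf
      have h2 := h.c3 ((g ^ (-(m:ℤ) - 1)) a) y
      rw [← h1] at h2
      rw [ih] at h2
      have h3 := congrArg g h2.symm
      rw [show ∀ z, g (g⁻¹ z) = z from fun z => Equiv.apply_symm_apply g z] at h3
      rw [← h3, ← Equiv.Perm.mul_apply, ← zpow_one_add]
      ring_nf

lemma gamma_zpow_right (h : IsConstructionPair g γ) (m : ℤ) (a y : X) :
    γ a ((g ^ m) y) = (g ^ (-m)) (γ a y) := by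
  rw [h.symm, gamma_zpow_left h, h.symm]

lemma gamma_sum (h : IsConstructionPair g γ) (y : X) {ι : Type*} (s : Finset ι) (f : ι → X) :
    γ (∑ k ∈ s, f k) y = ∑ k ∈ s, γ (f k) y :=
  map_sum (AddMonoidHom.mk' (fun a => γ a y) (fun a b => h.add_left a b y)) f s

lemma shiftQ (h : IsConstructionPair g γ) (x : X) (a b m : ℤ)
    (H : ∀ y : X, ∑ k ∈ Finset.Ico a b, (g ^ (-k)) (γ x y) = 0) :
    ∀ y : X, ∑ k ∈ Finset.Ico (m + a) (m + b), (g ^ (-k)) (γ x y) = 0 := by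
  intro y
  rw [← Finset.map_add_left_Ico, Finset.sum_map]
  calc ∑ k ∈ Finset.Ico a b, (g ^ (-(addLeftEmbedding m) k)) (γ x y)
      = ∑ k ∈ Finset.Ico a b, (g ^ (-k)) (γ x ((g ^ m) y)) := by
        refine Finset.sum_congr rfl fun k _ => ?_
        rw [gamma_zpow_right h, ← Equiv.Perm.mul_apply, ← zpow_add,
          addLeftEmbedding_apply]
        ring_nf
    _ = 0 := H _

lemma sum_Ico_int (N : ℕ) (f : ℤ → X) :
    ∑ k ∈ Finset.Ico (0:ℤ) (N:ℤ), f k = ∑ k ∈ Finset.range N, f k := by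
  refine Finset.sum_nbij' (i := fun k => k.toNat) (j := fun k => (k : ℤ)) ?_ ?_ ?_ ?_ ?_ <;>
    intros <;> simp_all [Finset.mem_Ico, Finset.mem_range] <;> omega

end Aux

theorem stmt_5 {X : Type*} [AddCommGroup X] (g : Equiv.Perm X) (γ : X → X → X)
    (h : IsConstructionPair g γ) (n : ℤ) (x : X) :
    ((∑ k ∈ Finset.range n.natAbs, (g ^ k) x ∈ radical γ)
        ↔ (∀ y : X, ∑ k ∈ I 0 n, (g ^ (-k)) (γ x y) = 0)) ∧
    ((∀ y : X, ∑ k ∈ I 0 n, (g ^ (-k)) (γ x y) = 0)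
        ↔ (∀ (y : X) (i : ℤ), ∑ k ∈ I i (i + n), (g ^ (-k)) (γ x y) = 0)) := by
  set N := n.natAbs with hN
  have key : ∀ y : X, γ (∑ k ∈ Finset.range N, (g ^ k) x) y
      = ∑ k ∈ Finset.Ico (0:ℤ) (N:ℤ), (g ^ (-k)) (γ x y) := by
    intro y
    rw [gamma_sum h, sum_Ico_int]
    refine Finset.sum_congr rfl fun k _ => ?_
    rw [← zpow_natCast g k, gamma_zpow_left h]
  have hrad : (∑ k ∈ Finset.range N, (g ^ k) x ∈ radical γ)
      ↔ ∀ y : X, ∑ k ∈ Finset.Ico (0:ℤ) (N:ℤ), (g ^ (-k)) (γ x y) = 0 := by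
    simp only [radical, Set.mem_setOf_eq, key]
  constructor
  · rw [hrad]
    rcases le_or_gt 0 n with hn | hn
    · have hI : I 0 n = Finset.Ico (0:ℤ) (N:ℤ) := by
        simp [I, min_eq_left hn, max_eq_right hn, hN, Int.natAbs_of_nonneg hn]
      rw [hI]
    · have hI : I 0 n = Finset.Ico n (0:ℤ) := by
        simp [I, min_eq_right hn.le, max_eq_left hn.le]
      have hcast : (N:ℤ) = -n := by omega
      rw [hI]
      constructor
      · intro H
        have := shiftQ h x 0 (N:ℤ) n H
        simpa [hcast] using this
      · intro H
        have := shiftQ h x n 0 (-n) H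
        simpa [hcast] using this
  · constructor
    · intro H y i
      have hI : I i (i + n) = Finset.Ico (i + min 0 n) (i + max 0 n) := by
        unfold I
        congr 1 <;> omega
      rw [hI]
      exact shiftQ h x (min 0 n) (max 0 n) i H y
    · intro H y
      have := H y 0
      simpa [I, zero_add] using this
end

section
/- Let (g,γ) be a construction pair on an abelian group (X,+) and let m ≥ 1 be an integer with g^m = id. Then ∑_{0≤k<3m} g^k(x) ∈ rad γ for every x ∈ X. If moreover rad γ contains no element of (additive) order 3, then ∑_{0≤k<m} g^k(x) ∈ rad γ for every x ∈ X. -/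
namespace CPAux

variable {X : Type*} [AddCommGroup X] {g : Equiv.Perm X} {γ : X → X → X}

lemma gamma_zero_left (h : IsConstructionPair g γ) (y : X) : γ 0 y = 0 := by
  have h0 := h.add_left 0 0 y
  simp only [add_zero] at h0
  exact (left_eq_add.mp h0)

lemma gamma_zero_right (h : IsConstructionPair g γ) (x : X) : γ x 0 = 0 := by
  rw [h.symm]; exact gamma_zero_left h x

lemma ginv_zero (h : IsConstructionPair g γ) : g⁻¹ (0 : X) = 0 := by
  have h0 := h.c3 0 0
  rw [h.alt, gamma_zero_right h] at h0
  exact h0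

lemma g_zero (h : IsConstructionPair g γ) : g (0 : X) = 0 := by
  have : g (g⁻¹ (0 : X)) = g 0 := by rw [ginv_zero h]
  rw [(by intro z; exact Equiv.apply_symm_apply g z : ∀ z : X, g (g⁻¹ z) = z)] at this
  exact this.symm

/-- `g` is additive on pairs with vanishing `γ`. -/
lemma g_add (h : IsConstructionPair g γ) {a b : X} (hab : γ a b = 0) :
    g (a + b) = g a + g b := by
  have h1 := h.c1 a b
  rw [hab, ginv_zero h, ginv_zero h, add_zero, add_zero, add_zero] at h1
  have := congrArg g h1
  rw [(by intro z; exact Equiv.apply_symm_apply g z : ∀ z : X, g (g⁻¹ z) = z)] at this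
  exact this.symm

lemma rad_g (h : IsConstructionPair g γ) {u : X} (hu : ∀ y, γ u y = 0) :
    ∀ y, γ (g u) y = 0 := by
  intro y
  rw [← h.c3, hu, ginv_zero h]

lemma rad_ginv (h : IsConstructionPair g γ) {u : X} (hu : ∀ y, γ u y = 0) :
    ∀ y, γ (g⁻¹ u) y = 0 := by
  intro y
  have h1 := h.c3 (g⁻¹ u) y
  rw [(by intro z; exact Equiv.apply_symm_apply g z : ∀ z : X, g (g⁻¹ z) = z), hu] at h1
  have := congrArg g h1
  rw [(by intro z; exact Equiv.apply_symm_apply g z : ∀ z : X, g (g⁻¹ z) = z), g_zero h] at this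
  exact this

lemma rad_add (h : IsConstructionPair g γ) {u v : X}
    (hu : ∀ y, γ u y = 0) (hv : ∀ y, γ v y = 0) : ∀ y, γ (u + v) y = 0 := by
  intro y; rw [h.add_left, hu, hv, add_zero]

lemma rad_gpow (h : IsConstructionPair g γ) {u : X} (hu : ∀ y, γ u y = 0) :
    ∀ (k : ℕ) (y : X), γ ((g ^ k) u) y = 0 := by
  intro k
  induction k with
  | zero => simpa using hu
  | succ n ih =>
      intro y
      rw [pow_succ', Equiv.Perm.mul_apply]
      exact rad_g h ih y

lemma pow_apply_add (g : Equiv.Perm X) (p q : ℕ) (x : X) :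
    (g ^ p) ((g ^ q) x) = (g ^ (p + q)) x := by
  rw [pow_add, Equiv.Perm.mul_apply]

/-- Powers of `g` are additive when the first summand is radical. -/
lemma gpow_add (h : IsConstructionPair g γ) {u : X} (hu : ∀ y, γ u y = 0)
    (k : ℕ) (v : X) : (g ^ k) (u + v) = (g ^ k) u + (g ^ k) v := by
  induction k with
  | zero => simp
  | succ n ih =>
      rw [pow_succ', Equiv.Perm.mul_apply, Equiv.Perm.mul_apply,
        Equiv.Perm.mul_apply, ih]
      exact g_add h (rad_gpow h hu n ((g ^ n) v))

lemma c3_pow (h : IsConstructionPair g γ) (k : ℕ) (x y : X) :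
    γ ((g ^ k) x) y = (g⁻¹ ^ k) (γ x y) := by
  induction k with
  | zero => simp
  | succ n ih =>
      rw [pow_succ', Equiv.Perm.mul_apply, ← h.c3, ih, pow_succ',
        Equiv.Perm.mul_apply]

lemma gamma_sum_left (h : IsConstructionPair g γ) {ι : Type*} (s : Finset ι)
    (F : ι → X) (y : X) : γ (∑ i ∈ s, F i) y = ∑ i ∈ s, γ (F i) y := by
  induction s using Finset.cons_induction with
  | empty => simpa using gamma_zero_left h y
  | cons a s ha ih =>
      rw [Finset.sum_cons, Finset.sum_cons, h.add_left, ih]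

lemma g_sum (h : IsConstructionPair g γ) {ι : Type*} (s : Finset ι)
    (F : ι → X) (hF : ∀ i ∈ s, ∀ y, γ (F i) y = 0) :
    g (∑ i ∈ s, F i) = ∑ i ∈ s, g (F i) := by
  induction s using Finset.cons_induction with
  | empty => simpa using g_zero h
  | cons a s ha ih =>
      rw [Finset.sum_cons, Finset.sum_cons,
        g_add h (hF a (Finset.mem_cons_self a s) _),
        ih (fun i hi => hF i (Finset.mem_cons_of_mem hi))]

lemma rad_sum (h : IsConstructionPair g γ) {ι : Type*} (s : Finset ι)
    (F : ι → X) (hF : ∀ i ∈ s, ∀ y, γ (F i) y = 0) :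
    ∀ y, γ (∑ i ∈ s, F i) y = 0 := by
  intro y
  rw [gamma_sum_left h]
  exact Finset.sum_eq_zero (fun i hi => hF i hi y)

/-- The defect term of additivity of `g`. -/
def eterm (g : Equiv.Perm X) (γ : X → X → X) (a b : X) (j : ℕ) : X :=
  γ ((g ^ j) a) ((g ^ j) b) + g (γ ((g ^ j) a) ((g ^ j) b))
    + g⁻¹ (γ ((g ^ j) a) ((g ^ j) b))

lemma rad_eterm (h : IsConstructionPair g γ) (a b : X) (j : ℕ) :
    ∀ y, γ (eterm g γ a b j) y = 0 := by
  have hd : ∀ y, γ (γ ((g ^ j) a) ((g ^ j) b)) y = 0 := h.c2 _ _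
  exact rad_add h (rad_add h hd (rad_g h hd)) (rad_ginv h hd)

/-- The quasi-additivity relation obtained from C1. -/
lemma star (h : IsConstructionPair g γ) (x y : X) :
    g (x + y) + (γ x y + g (γ x y) + g⁻¹ (γ x y)) = g x + g y := by
  have hc : ∀ z, γ (γ x y) z = 0 := h.c2 x y
  have hic : ∀ z, γ (g⁻¹ (γ x y)) z = 0 := rad_ginv h hc
  have hiic : ∀ z, γ (g⁻¹ (g⁻¹ (γ x y))) z = 0 := rad_ginv h hic
  have h1 := h.c1 x y
  have h2 := congrArg g h1
  rw [(by intro z; exact Equiv.apply_symm_apply g z : ∀ z : X, g (g⁻¹ z) = z)] at h2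
  have hre : x + y + γ x y + g⁻¹ (γ x y) + g⁻¹ (g⁻¹ (γ x y))
      = γ x y + (g⁻¹ (γ x y) + (g⁻¹ (g⁻¹ (γ x y)) + (x + y))) := by abel
  rw [hre, g_add h (hc _), g_add h (hic _), g_add h (hiic _),
    (by intro z; exact Equiv.apply_symm_apply g z : ∀ z : X, g (g⁻¹ z) = z), (by intro z; exact Equiv.apply_symm_apply g z : ∀ z : X, g (g⁻¹ z) = z)] at h2
  rw [h2]; abel

/-- The accumulated defect after `k` iterations of `g`. -/
lemma claim (h : IsConstructionPair g γ) (a b : X) (k : ℕ) :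
    (g ^ k) (a + b) + ∑ j ∈ Finset.range k, (g ^ (k - 1 - j)) (eterm g γ a b j)
      = (g ^ k) a + (g ^ k) b := by
  induction k with
  | zero => simp
  | succ n ih =>
      have hrad : ∀ j ∈ Finset.range n,
          ∀ y, γ ((g ^ (n - 1 - j)) (eterm g γ a b j)) y = 0 :=
        fun j _ => rad_gpow h (rad_eterm h a b j) _
      have hSig : ∀ y, γ (∑ j ∈ Finset.range n,
          (g ^ (n - 1 - j)) (eterm g γ a b j)) y = 0 := rad_sum h _ _ hrad
      have h2 := congrArg g ih
      have hre : (g ^ n) (a + b) + ∑ j ∈ Finset.range n,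
            (g ^ (n - 1 - j)) (eterm g γ a b j)
          = (∑ j ∈ Finset.range n, (g ^ (n - 1 - j)) (eterm g γ a b j))
            + (g ^ n) (a + b) := by abel
      rw [hre, g_add h (hSig _), g_sum h _ _ hrad] at h2
      have h3 : ∀ j ∈ Finset.range n,
          g ((g ^ (n - 1 - j)) (eterm g γ a b j))
            = (g ^ (n + 1 - 1 - j)) (eterm g γ a b j) := by
        intro j hj
        have hj' : j < n := Finset.mem_range.mp hj
        have hh : g ((g ^ (n - 1 - j)) (eterm g γ a b j))
            = (g ^ (1 + (n - 1 - j))) (eterm g γ a b j) := by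
          rw [← pow_apply_add g 1 (n - 1 - j), pow_one]
        have he : 1 + (n - 1 - j) = n + 1 - 1 - j := by omega
        rw [hh, he]
      rw [Finset.sum_congr rfl h3] at h2
      have h5 : g ((g ^ n) a + (g ^ n) b)
          = (g ^ (n + 1)) a + (g ^ (n + 1)) b - eterm g γ a b n := by
        rw [eq_sub_iff_add_eq]
        simp only [pow_succ', Equiv.Perm.mul_apply]
        exact star h _ _
      rw [h5, eq_sub_iff_add_eq] at h2
      rw [Finset.sum_range_succ]
      have h6 : (g ^ (n + 1 - 1 - n)) (eterm g γ a b n) = eterm g γ a b n := by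
        have hz : n + 1 - 1 - n = 0 := by omega
        rw [hz, pow_zero, Equiv.Perm.one_apply]
      rw [h6]
      have h7 : (g ^ (n + 1)) (a + b) = g ((g ^ n) (a + b)) := by
        rw [pow_succ', Equiv.Perm.mul_apply]
      rw [h7, ← h2]
      abel

lemma sum_range_three_mul {M : Type*} [AddCommMonoid M] (f : ℕ → M) (n : ℕ) :
    ∑ s ∈ Finset.range (3 * n), f s
      = ∑ j ∈ Finset.range n, (f (3 * j) + f (3 * j + 1) + f (3 * j + 2)) := by
  induction n with
  | zero => simp
  | succ k ih =>
      have h1 : 3 * (k + 1) = 3 * k + 1 + 1 + 1 := by ring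
      rw [h1, Finset.sum_range_succ, Finset.sum_range_succ,
        Finset.sum_range_succ, ih, Finset.sum_range_succ]
      abel

end CPAux

open CPAux in
theorem stmt_6 {X : Type*} [AddCommGroup X] (g : Equiv.Perm X) (γ : X → X → X)
    (h : IsConstructionPair g γ) (m : ℕ) (hm : 1 ≤ m) (hgm : g ^ m = 1) :
    (∀ x : X, ∑ k ∈ Finset.range (3 * m), (g ^ k) x ∈ radical γ) ∧
    ((∀ z ∈ radical γ, 3 • z = 0 → z = 0) →
      ∀ x : X, ∑ k ∈ Finset.range m, (g ^ k) x ∈ radical γ) := by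
  haveI : NeZero m := ⟨by omega⟩
  have hinv : g⁻¹ = g ^ (m - 1) := by
    refine inv_eq_of_mul_eq_one_right ?_
    rw [← pow_succ']
    have hm1 : m - 1 + 1 = m := by omega
    rw [hm1, hgm]
  have hperiod : ∀ p : ℕ, g ^ p = g ^ (p % m) := by
    intro p
    conv_lhs => rw [← Nat.div_add_mod p m]
    rw [pow_add, pow_mul, hgm, one_pow, one_mul]
  have hGnat : ∀ p : ℕ, g ^ p = g ^ (ZMod.val (p : ZMod m)) := by
    intro p
    rw [ZMod.val_natCast, ← hperiod]
  have hm1cast : ((m - 1 : ℕ) : ZMod m) = -1 := by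
    rw [Nat.cast_sub hm, ZMod.natCast_self, Nat.cast_one]
    ring
  -- main identity: for c = γ a b, ∑_{s < 3m} g^{-s} c = 0
  have main : ∀ a b : X, ∑ s ∈ Finset.range (3 * m),
      (g ^ (ZMod.val (-(s : ZMod m)))) (γ a b) = 0 := by
    intro a b
    set c : X := γ a b with hc
    have hcrad : ∀ y, γ c y = 0 := h.c2 a b
    set F : ℕ → X := fun s => (g ^ (ZMod.val (-(s : ZMod m)))) c with hFdef
    have hcast : ∀ P s : ℕ, ((P : ZMod m) = -(s : ZMod m)) →
        (g ^ P) c = F s := by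
      intro P s hPs
      rw [hGnat P, hPs]
    -- the claim at k = m gives the vanishing of the total defect
    have h1 := claim h a b m
    rw [hgm] at h1
    simp only [Equiv.Perm.one_apply] at h1
    have h2 : ∑ j ∈ Finset.range m, (g ^ (m - 1 - j)) (eterm g γ a b j) = 0 :=
      add_eq_left.mp h1
    have hstep : ∀ j ∈ Finset.range m,
        (g ^ (m - 1 - j)) (eterm g γ a b j)
          = F (3 * j) + F (3 * j + 1) + F (3 * j + 2) := by
      intro j hj
      have hj' : j < m := Finset.mem_range.mp hj
      have hqcast : (((m - 1) * j : ℕ) : ZMod m) = -(j : ZMod m) := by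
        rw [Nat.cast_mul, hm1cast]; ring
      have hpcast : ((m - 1 - j : ℕ) : ZMod m) = -1 - (j : ZMod m) := by
        have hmj : m - 1 - j = m - (1 + j) := by omega
        rw [hmj, Nat.cast_sub (by omega : 1 + j ≤ m), ZMod.natCast_self]
        push_cast
        ring
      have hd : γ ((g ^ j) a) ((g ^ j) b)
          = (g ^ ((m - 1) * j)) ((g ^ ((m - 1) * j)) c) := by
        rw [c3_pow h j a ((g ^ j) b), h.symm a ((g ^ j) b),
          c3_pow h j b a, h.symm b a, ← hc, hinv, ← pow_mul]
      set q : ℕ := (m - 1) * j with hq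
      have hdrad : ∀ y, γ ((g ^ q) ((g ^ q) c)) y = 0 :=
        fun y => rad_gpow h (fun z => rad_gpow h hcrad q z) q y
      have hgdrad : ∀ y, γ (g ((g ^ q) ((g ^ q) c))) y = 0 := rad_g h hdrad
      have hA : (g ^ (m - 1 - j)) ((g ^ q) ((g ^ q) c)) = F (3 * j + 1) := by
        rw [pow_apply_add, pow_apply_add]
        refine hcast _ _ ?_
        rw [Nat.cast_add, Nat.cast_add, hpcast, hqcast]
        push_cast
        ring
      have hB : (g ^ (m - 1 - j)) (g ((g ^ q) ((g ^ q) c))) = F (3 * j) := by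
        have hg1 : g ((g ^ q) ((g ^ q) c)) = (g ^ (1 + (q + q))) c := by
          rw [pow_apply_add, ← pow_apply_add g 1 (q + q), pow_one]
        rw [hg1, pow_apply_add]
        refine hcast _ _ ?_
        rw [Nat.cast_add, Nat.cast_add, Nat.cast_add, hpcast, hqcast]
        push_cast
        ring
      have hC : (g ^ (m - 1 - j)) (g⁻¹ ((g ^ q) ((g ^ q) c))) = F (3 * j + 2) := by
        have hg1 : g⁻¹ ((g ^ q) ((g ^ q) c)) = (g ^ ((m - 1) + (q + q))) c := by
          rw [pow_apply_add, hinv, pow_apply_add]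
        rw [hg1, pow_apply_add]
        refine hcast _ _ ?_
        rw [Nat.cast_add, Nat.cast_add, Nat.cast_add, hpcast, hqcast, hm1cast]
        push_cast
        ring
      show (g ^ (m - 1 - j)) (eterm g γ a b j) = _
      unfold eterm
      rw [hd, gpow_add h (rad_add h hdrad hgdrad),
        gpow_add h hdrad, hA, hB, hC]
      abel
    rw [Finset.sum_congr rfl hstep] at h2
    rw [sum_range_three_mul F m]
    exact h2
  -- expressing γ (∑ g^k x) y through the F-sums
  have hexp : ∀ (n : ℕ) (x y : X),
      γ (∑ k ∈ Finset.range n, (g ^ k) x) y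
        = ∑ k ∈ Finset.range n, (g ^ (ZMod.val (-(k : ZMod m)))) (γ x y) := by
    intro n x y
    rw [gamma_sum_left h]
    refine Finset.sum_congr rfl ?_
    intro k _
    rw [c3_pow h, hinv, ← pow_mul, hGnat ((m - 1) * k)]
    have : (((m - 1) * k : ℕ) : ZMod m) = -(k : ZMod m) := by
      rw [Nat.cast_mul, hm1cast]; ring
    rw [this]
  constructor
  · intro x
    show ∀ y, γ _ y = 0
    intro y
    rw [hexp (3 * m) x y]
    exact main x y
  · intro h3 x
    show ∀ y, γ _ y = 0
    intro y
    have hz : γ (∑ k ∈ Finset.range m, (g ^ k) x) y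
        = ∑ k ∈ Finset.range m, (g ^ (ZMod.val (-(k : ZMod m)))) (γ x y) :=
      hexp m x y
    set N : X := ∑ k ∈ Finset.range m, (g ^ (ZMod.val (-(k : ZMod m)))) (γ x y)
      with hN
    have hmain := main x y
    have h3m : 3 * m = m + (m + m) := by ring
    rw [h3m, Finset.sum_range_add, Finset.sum_range_add] at hmain
    have hsh1 : ∀ s ∈ Finset.range m,
        (g ^ (ZMod.val (-((m + s : ℕ) : ZMod m)))) (γ x y)
          = (g ^ (ZMod.val (-(s : ZMod m)))) (γ x y) := by
      intro s _
      have : ((m + s : ℕ) : ZMod m) = (s : ZMod m) := by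
        push_cast [ZMod.natCast_self]
        ring
      rw [this]
    have hsh2 : ∀ s ∈ Finset.range m,
        (g ^ (ZMod.val (-((m + (m + s) : ℕ) : ZMod m)))) (γ x y)
          = (g ^ (ZMod.val (-(s : ZMod m)))) (γ x y) := by
      intro s _
      have : ((m + (m + s) : ℕ) : ZMod m) = (s : ZMod m) := by
        push_cast [ZMod.natCast_self]
        ring
      rw [this]
    rw [Finset.sum_congr rfl hsh1, Finset.sum_congr rfl hsh2, ← hN] at hmain
    have h3N : 3 • N = 0 := by
      have : 3 • N = N + (N + N) := by abel
      rw [this]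
      exact hmain
    have hNrad : N ∈ radical γ := by
      rw [← hz]
      exact fun w => h.c2 _ _ w
    rw [hz]
    exact h3 N hNrad h3N
end

section
/- Let (g,γ) be a construction pair on an abelian group (X,+), let n ≥ 1 be an integer, and define F : ℤ × ℤ × X × X → X by F(i,j,x,y) = g^{−j}(x)+y+∑_{k∈I(i+j,−j)} g^{−k}(γ(x,y)). Then the following are equivalent: (i) F(i+n,j,x,y) = F(i,j,x,y) and F(i,j+n,x,y) = F(i,j,x,y) for all integers i,j and all x,y ∈ X; (ii) g^n = id and ∑_{0≤k<n} g^k(x) ∈ rad γ for every x ∈ X. -/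
section Aux

variable {X : Type*} [AddCommGroup X] {g : Equiv.Perm X} {γ : X → X → X}

/-- γ-values are 2-torsion (symmetric + alternating biadditive). -/
lemma aux_two (h : IsConstructionPair g γ) (x y : X) : γ x y + γ x y = 0 := by
  have h0 := h.alt (x + y)
  rw [h.add_left, h.add_right, h.add_right, h.alt, h.alt, h.symm y x] at h0
  simpa using h0

lemma aux_zero_right (h : IsConstructionPair g γ) (x : X) : γ x 0 = 0 := by
  have h0 := h.add_right x 0 0
  rw [add_zero] at h0
  exact (left_eq_add.mp h0)

/-- Iterated version of (C3). -/
lemma aux_pow (h : IsConstructionPair g γ) (k : ℤ) (x y : X) :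
    (g ^ (-k)) (γ x y) = γ ((g ^ k) x) y := by
  induction k using Int.induction_on with
  | zero => simp
  | succ i ih =>
    have e1 : (g ^ (-(i + 1 : ℤ))) (γ x y) = g⁻¹ ((g ^ (-(i : ℤ))) (γ x y)) := by
      rw [show (-(i + 1 : ℤ)) = (-1) + (-(i : ℤ)) by ring, zpow_add, zpow_neg_one,
        Equiv.Perm.mul_apply]
    rw [e1, ih, h.c3]
    congr 1
    rw [show ((i : ℤ) + 1) = 1 + (i : ℤ) by ring, zpow_add, zpow_one,
      Equiv.Perm.mul_apply]
  | pred i ih =>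
    have c3 := h.c3 ((g ^ (-(i : ℤ) - 1)) x) y
    have e2 : g ((g ^ (-(i : ℤ) - 1)) x) = (g ^ (-(i : ℤ))) x := by
      conv_rhs => rw [show (-(i : ℤ)) = 1 + (-(i : ℤ) - 1) by ring, zpow_add, zpow_one]
      rw [Equiv.Perm.mul_apply]
    rw [e2] at c3
    rw [neg_neg] at ih
    rw [← ih] at c3
    have hg := congrArg g c3
    rw [show ∀ z, g (g⁻¹ z) = z from fun z => g.apply_symm_apply z] at hg
    rw [show (-(-(i : ℤ) - 1)) = 1 + (i : ℤ) by ring, zpow_add, zpow_one,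
      Equiv.Perm.mul_apply, ← hg]

lemma sum_Ico_consec (f : ℤ → X) {a b c : ℤ} (h1 : a ≤ b) (h2 : b ≤ c) :
    (∑ k ∈ Finset.Ico a b, f k) + ∑ k ∈ Finset.Ico b c, f k
      = ∑ k ∈ Finset.Ico a c, f k := by
  rw [← Finset.sum_union (Finset.Ico_disjoint_Ico_consecutive a b c),
    Finset.Ico_union_Ico_eq_Ico h1 h2]

lemma aux_sum_hom (h : IsConstructionPair g γ) (y : X) (s : Finset ℤ) (F : ℤ → X) :
    γ (∑ k ∈ s, F k) y = ∑ k ∈ s, γ (F k) y :=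
  map_sum (AddMonoidHom.mk' (fun x => γ x y) (fun a b => h.add_left a b y)) F s

/-- Shifting the first endpoint of the unordered interval by `n` does not change
the sum of an `n`-periodic, zero-period-sum, 2-torsion-valued function. -/
lemma aux_shift {f : ℤ → X} {n : ℤ} (hn : 1 ≤ n)
    (hper : ∀ a, ∑ k ∈ Finset.Ico a (a + n), f k = 0)
    (htor : ∀ k, f k + f k = 0) (a b : ℤ) :
    ∑ k ∈ I (a + n) b, f k = ∑ k ∈ I a b, f k := by
  unfold I
  rcases le_or_gt b a with hba | hab
  · rw [min_eq_right (by linarith), max_eq_left (by linarith),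
      min_eq_right hba, max_eq_left hba,
      ← sum_Ico_consec f hba (by linarith : a ≤ a + n), hper a, add_zero]
  · rcases le_or_gt b (a + n) with hb2 | hb2
    · rw [min_eq_right hb2, max_eq_left hb2,
        min_eq_left hab.le, max_eq_right hab.le]
      have hsplit := sum_Ico_consec f hab.le hb2
      rw [hper a] at hsplit
      have htors : (∑ k ∈ Finset.Ico a b, f k) + (∑ k ∈ Finset.Ico a b, f k) = 0 := by
        rw [← Finset.sum_add_distrib]
        exact Finset.sum_eq_zero fun k _ => htor k
      have key : (∑ k ∈ Finset.Ico b (a + n), f k) - (∑ k ∈ Finset.Ico a b, f k)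
          = ((∑ k ∈ Finset.Ico a b, f k) + (∑ k ∈ Finset.Ico b (a + n), f k))
            - ((∑ k ∈ Finset.Ico a b, f k) + (∑ k ∈ Finset.Ico a b, f k)) := by abel
      rw [hsplit, htors, sub_zero] at key
      exact sub_eq_zero.mp key
    · rw [min_eq_left (by linarith), max_eq_right (by linarith),
        min_eq_left hab.le, max_eq_right hab.le,
        ← sum_Ico_consec f (by linarith : a ≤ a + n) hb2.le, hper a, zero_add]

lemma I_comm (a b : ℤ) : I a b = I b a := by
  unfold I; rw [min_comm, max_comm]

end Aux

theorem stmt_7 {X : Type*} [AddCommGroup X] (g : Equiv.Perm X) (γ : X → X → X)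
    (h : IsConstructionPair g γ) (n : ℤ) (hn : 1 ≤ n)
    (F : ℤ → ℤ → X → X → X)
    (hF : ∀ (i j : ℤ) (x y : X),
      F i j x y = (g ^ (-j)) x + y + ∑ k ∈ I (i + j) (-j), (g ^ (-k)) (γ x y)) :
    (∀ (i j : ℤ) (x y : X),
        F (i + n) j x y = F i j x y ∧ F i (j + n) x y = F i j x y)
      ↔ (g ^ n = 1 ∧ ∀ x : X, ∑ k ∈ Finset.Ico (0 : ℤ) n, (g ^ k) x ∈ radical γ) := by
  have hI00 : I 0 0 = ∅ := by simp [I]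
  have hIn0 : I n 0 = Finset.Ico (0 : ℤ) n := by
    unfold I
    rw [min_eq_right (by linarith), max_eq_left (by linarith)]
  constructor
  · intro hi
    constructor
    · -- g ^ n = 1
      have hx : ∀ x : X, (g ^ (-n)) x = x := by
        intro x
        have h2 := (hi 0 0 x 0).2
        rw [hF, hF] at h2
        have hsum : ∀ s : Finset ℤ, ∑ k ∈ s, (g ^ (-k)) (γ x 0) = 0 := fun s =>
          Finset.sum_eq_zero fun k _ => by rw [aux_pow h, aux_zero_right h]
        rw [hsum, hsum] at h2
        simpa using h2
      have hinv : g ^ (-n) = 1 := Equiv.ext fun x => hx x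
      rw [zpow_neg] at hinv
      exact inv_eq_one.mp hinv
    · -- radical condition
      intro x y
      have h1 := (hi 0 0 x y).1
      rw [hF, hF] at h1
      simp only [add_zero, zero_add, neg_zero] at h1
      rw [hI00, hIn0, Finset.sum_empty, add_zero] at h1
      have h1' : ∑ k ∈ Finset.Ico (0 : ℤ) n, (g ^ (-k)) (γ x y) = 0 :=
        add_eq_left.mp h1
      calc γ (∑ k ∈ Finset.Ico (0 : ℤ) n, (g ^ k) x) y
          = ∑ k ∈ Finset.Ico (0 : ℤ) n, γ ((g ^ k) x) y := aux_sum_hom h y _ _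
        _ = ∑ k ∈ Finset.Ico (0 : ℤ) n, (g ^ (-k)) (γ x y) :=
            (Finset.sum_congr rfl fun k _ => (aux_pow h k x y).symm)
        _ = 0 := h1'
  · rintro ⟨hg, hrad⟩ i j x y
    set f : ℤ → X := fun k => γ ((g ^ k) x) y with hf
    have htor : ∀ k, f k + f k = 0 := fun k => aux_two h _ _
    have hper : ∀ a, ∑ k ∈ Finset.Ico a (a + n), f k = 0 := by
      intro a
      have hmap : Finset.Ico a (a + n)
          = (Finset.Ico (0 : ℤ) n).map (addRightEmbedding a) := by
        rw [Finset.map_add_right_Ico, zero_add, add_comm n a]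
      have hre : ∑ k ∈ Finset.Ico a (a + n), (g ^ k) x
          = ∑ k ∈ Finset.Ico (0 : ℤ) n, (g ^ k) ((g ^ a) x) := by
        rw [hmap, Finset.sum_map]
        refine Finset.sum_congr rfl fun k _ => ?_
        simp only [addRightEmbedding_apply]
        rw [zpow_add, Equiv.Perm.mul_apply]
      calc ∑ k ∈ Finset.Ico a (a + n), f k
          = γ (∑ k ∈ Finset.Ico a (a + n), (g ^ k) x) y := (aux_sum_hom h y _ _).symm
        _ = γ (∑ k ∈ Finset.Ico (0 : ℤ) n, (g ^ k) ((g ^ a) x)) y := by rw [hre]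
        _ = 0 := hrad ((g ^ a) x) y
    have hshift : ∀ a b, ∑ k ∈ I (a + n) b, f k = ∑ k ∈ I a b, f k :=
      aux_shift hn hper htor
    have hshiftb : ∀ a b, ∑ k ∈ I a (b + n), f k = ∑ k ∈ I a b, f k := by
      intro a b
      rw [I_comm a (b + n), hshift b a, I_comm b a]
    have hshiftb' : ∀ a b, ∑ k ∈ I a (b - n), f k = ∑ k ∈ I a b, f k := by
      intro a b
      have := hshiftb a (b - n)
      rw [show b - n + n = b by ring] at this
      exact this.symm
    have e : ∀ a b, ∑ k ∈ I a b, (g ^ (-k)) (γ x y) = ∑ k ∈ I a b, f k :=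
      fun a b => Finset.sum_congr rfl fun k _ => aux_pow h k x y
    constructor
    · rw [hF, hF, e, e, show i + n + j = (i + j) + n by ring, hshift]
    · rw [hF, hF, e, e]
      have hgj : (g ^ (-(j + n))) x = (g ^ (-j)) x := by
        have hn1 : g ^ (-n) = 1 := by rw [zpow_neg, hg, inv_one]
        rw [show -(j + n) = (-j) + (-n) by ring, zpow_add, hn1, mul_one]
      rw [hgj, show i + (j + n) = ((i + j) + n) by ring, hshift,
        show -(j + n) = (-j) - n by ring, hshiftb']
end
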